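/- For every real x ≥ 0, the sum ∑_{k=1}^∞ μ(k)·ν(x/k) is a finite sum (only terms with k ≤ x are nonzero) and equals 0 if 0 ≤ x < 1, equals 1 if 1 ≤ x < 2, and equals −1 if x ≥ 2. -/

import Mathlib

open ArithmeticFunction

noncomputable def nu (x : ℝ) : ℝ := 2 * Int.fract (x / 2) - Int.fract x

open Finset in
lemma key_sum (n : ℕ) :
    ∑ k ∈ Finset.Ioc 0 n, (moebius k : ℝ) * ((n / k : ℕ) : ℝ) =
      if n = 0 then 0 else 1 := by
  have hdiv : ∀ m : ℕ, ∑ d ∈ m.divisors, (moebius d : ℝ) = if m = 1 then 1 else 0 := by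
    intro m
    have h := congrArg (fun f : ArithmeticFunction ℤ => f m) moebius_mul_coe_zeta
    simp only [coe_mul_zeta_apply, one_apply] at h
    have := congrArg (fun z : ℤ => (z : ℝ)) h
    push_cast at this
    simpa using this
  calc ∑ k ∈ Ioc 0 n, (moebius k : ℝ) * ((n / k : ℕ) : ℝ)
      = ∑ k ∈ Ioc 0 n, ∑ m ∈ Ioc 0 n, if k ∣ m then (moebius k : ℝ) else 0 := by
        refine sum_congr rfl fun k _ => ?_
        rw [← sum_filter, sum_const, Nat.Ioc_filter_dvd_card_eq_div, nsmul_eq_mul, mul_comm]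
    _ = ∑ m ∈ Ioc 0 n, ∑ k ∈ Ioc 0 n, if k ∣ m then (moebius k : ℝ) else 0 := sum_comm
    _ = ∑ m ∈ Ioc 0 n, if m = 1 then (1 : ℝ) else 0 := by
        refine sum_congr rfl fun m hm => ?_
        rw [← sum_filter]
        rw [mem_Ioc] at hm
        have hfe : (Ioc 0 n).filter (· ∣ m) = m.divisors := by
          ext k
          simp only [mem_filter, mem_Ioc, Nat.mem_divisors]
          constructor
          · rintro ⟨⟨-, -⟩, hd⟩; exact ⟨hd, by omega⟩
          · rintro ⟨hd, -⟩
            have hk := Nat.le_of_dvd hm.1 hd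
            have : 0 < k := Nat.pos_of_dvd_of_pos hd hm.1
            exact ⟨⟨this, le_trans hk hm.2⟩, hd⟩
        rw [hfe, hdiv]
    _ = if n = 0 then 0 else 1 := by
        rw [Finset.sum_ite_eq' (Ioc 0 n) 1 (fun _ => (1 : ℝ))]
        by_cases hn : n = 0
        · simp [hn]
        · simp [Finset.mem_Ioc, Nat.one_le_iff_ne_zero, hn]

open Finset in
lemma key_sum' (m N : ℕ) (h : m ≤ N) :
    ∑ k ∈ Finset.range N, (moebius (k + 1) : ℝ) * ((m / (k + 1) : ℕ) : ℝ) =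
      if m = 0 then 0 else 1 := by
  rw [← Finset.sum_subset (Finset.range_subset_range.2 h)
    (fun k _ hk => by
      rw [Finset.mem_range, not_lt] at hk
      rw [Nat.div_eq_of_lt (by omega)]
      simp)]
  have himg : Finset.Ioc 0 m = (Finset.range m).image (· + 1) := by
    ext k
    simp only [mem_Ioc, mem_image, mem_range]
    constructor
    · rintro ⟨h1, h2⟩; exact ⟨k - 1, by omega, by omega⟩
    · rintro ⟨a, ha, rfl⟩; omega
  have := key_sum m
  rw [himg, Finset.sum_image (by intro a _ b _ hab; simp only at hab; omega)] at this
  exact this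

lemma nu_floor (y : ℝ) : nu y = (⌊y⌋ : ℝ) - 2 * (⌊y / 2⌋ : ℝ) := by
  unfold nu
  rw [Int.fract, Int.fract]
  ring

lemma nu_zero_of_lt {x c : ℝ} (hx : 0 ≤ x) (hk : x < c) : nu (x / c) = 0 := by
  have hk0 : 0 < c := lt_of_le_of_lt hx hk
  have h1 : 0 ≤ x / c := div_nonneg hx hk0.le
  have h2 : x / c < 1 := (div_lt_one hk0).2 hk
  rw [nu_floor, Int.floor_eq_zero_iff.2 ⟨h1, h2⟩,
    Int.floor_eq_zero_iff.2 ⟨by positivity, by linarith [div_nonneg hx hk0.le]⟩]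
  simp

theorem stmt_7 : ∀ x : ℝ, 0 ≤ x →
    (∀ k : ℕ, x < k → (moebius k : ℝ) * nu (x / k) = 0) ∧
    (∑' k : ℕ, (moebius (k + 1) : ℝ) * nu (x / (k + 1))) =
      (if x < 1 then 0 else if x < 2 then 1 else -1) := by
  intro x hx
  refine ⟨fun k hk => by rw [nu_zero_of_lt hx hk, mul_zero], ?_⟩
  set N : ℕ := ⌊x⌋₊ with hN
  have htsum : (∑' k : ℕ, (moebius (k + 1) : ℝ) * nu (x / (k + 1))) =
      ∑ k ∈ Finset.range N, (moebius (k + 1) : ℝ) * nu (x / (k + 1)) := by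
    refine tsum_eq_sum fun k hk => ?_
    rw [Finset.mem_range, not_lt] at hk
    have hxk : x < (k : ℝ) + 1 := by
      have h1 : x < (N : ℝ) + 1 := Nat.lt_floor_add_one x
      have hNk : (N : ℝ) ≤ k := by exact_mod_cast hk
      linarith
    rw [nu_zero_of_lt hx hxk, mul_zero]
  rw [htsum]
  -- rewrite each nu term via nat floors
  have hterm : ∀ k ∈ Finset.range N, (moebius (k + 1) : ℝ) * nu (x / (k + 1)) =
      (moebius (k + 1) : ℝ) * ((N / (k + 1) : ℕ) : ℝ)
        - 2 * ((moebius (k + 1) : ℝ) * ((N / 2 / (k + 1) : ℕ) : ℝ)) := by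
    intro k _
    have hc : ((k : ℝ) + 1) = ((k + 1 : ℕ) : ℝ) := by push_cast; ring
    rw [hc]
    have hk1 : (0 : ℝ) < (k + 1 : ℕ) := by positivity
    have hy : 0 ≤ x / (k + 1 : ℕ) := div_nonneg hx hk1.le
    have hfl1 : (⌊x / (k + 1 : ℕ)⌋ : ℝ) = ((N / (k + 1) : ℕ) : ℝ) := by
      rw [← Nat.floor_div_natCast x (k + 1), natCast_floor_eq_intCast_floor hy]
    have hfl2 : (⌊x / (k + 1 : ℕ) / 2⌋ : ℝ) = ((N / 2 / (k + 1) : ℕ) : ℝ) := by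
      have : N / 2 / (k + 1) = N / (k + 1) / 2 := by
        rw [Nat.div_div_eq_div_mul, Nat.div_div_eq_div_mul, Nat.mul_comm]
      have hy2 : 0 ≤ x / (k + 1 : ℕ) / 2 := by positivity
      rw [this, ← Nat.floor_div_natCast x (k + 1), ← Nat.floor_div_ofNat (x / (k + 1 : ℕ)) 2,
        natCast_floor_eq_intCast_floor hy2]
    rw [nu_floor, hfl1, hfl2]
    ring
  rw [Finset.sum_congr rfl hterm, Finset.sum_sub_distrib, ← Finset.mul_sum,
    key_sum' N N le_rfl, key_sum' (N / 2) N (Nat.div_le_self _ _)]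
  have hfloor_lt : (N : ℝ) ≤ x := Nat.floor_le hx
  have hlt_floor : x < N + 1 := Nat.lt_floor_add_one x
  by_cases h1 : x < 1
  · have hN0 : N = 0 := Nat.floor_eq_zero.2 h1
    simp [h1, hN0]
  · have hN1 : 1 ≤ N := Nat.le_floor (by exact_mod_cast not_lt.1 h1)
    by_cases h2 : x < 2
    · have hN2 : N < 2 := by
        by_contra hc
        push_neg at hc
        have : (2 : ℝ) ≤ N := by exact_mod_cast hc
        linarith
      have : N = 1 := by omega
      simp [h1, h2, this]
    · have hN2 : 2 ≤ N := Nat.le_floor (by exact_mod_cast not_lt.1 h2)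
      have hM : N / 2 ≠ 0 := by omega
      have hN0 : N ≠ 0 := by omega
      simp only [h1, h2, hM, hN0, if_false]
      norm_num
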